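/- For every q ∈ (2,4), α > 0 and μ > 0, the reduced energy Ẽ_{q,α} is bounded from below on X_μ: there exists C ≥ 0 such that Ẽ_{q,α}(u) ≥ −C for every u ∈ X_μ; in particular 𝓔̃_{q,α}(μ) > −∞. -/

import Mathlib

open MeasureTheory Set

/-- The weight `g(x) = 4` for `x ≤ 1` and `g(x) = 4(2x−1)` for `x > 1`. -/
noncomputable def g (x : ℝ) : ℝ := if x ≤ 1 then 4 else 4 * (2 * x - 1)

/-- `u` belongs to the weighted Sobolev space `H¹(ℝ⁺, g dx)` with derivative
`u'`: it is locally absolutely continuous on `[0,∞)` (primitive of `u'`) and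
both `u² g` and `u'² g` are integrable on `(0,∞)`. -/
def InH1g (u u' : ℝ → ℝ) : Prop :=
  IntegrableOn (fun x => (u x) ^ 2 * g x) (Ioi 0) ∧
    IntegrableOn (fun x => (u' x) ^ 2 * g x) (Ioi 0) ∧
    ∀ a b : ℝ, 0 ≤ a → 0 ≤ b → u b - u a = ∫ x in a..b, u' x

/-- The weighted mass `∫₀^∞ u² g dx`. -/
noncomputable def massg (u : ℝ → ℝ) : ℝ := ∫ x in Ioi (0 : ℝ), (u x) ^ 2 * g x

/-- The reduced energy `Ẽ_{q,α}(u) = (1/2)∫₀^∞ u'² g dx − (α/q)|u(0)|^q`. -/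
noncomputable def energyg (q α : ℝ) (u u' : ℝ → ℝ) : ℝ :=
  (1 / 2) * (∫ x in Ioi (0 : ℝ), (u' x) ^ 2 * g x) - (α / q) * |u 0| ^ q

/-- The set of reduced energies over `X_μ = {u : 0 < ∫ u² g ≤ μ}`;
its infimum is `𝓔̃_{q,α}(μ)`. -/
def levelSetg (q α μ : ℝ) : Set ℝ :=
  {E | ∃ u u' : ℝ → ℝ, InH1g u u' ∧ 0 < massg u ∧ massg u ≤ μ ∧
    E = energyg q α u u'}

lemma g_ge4 (x : ℝ) : 4 ≤ g x := by
  unfold g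
  split
  · norm_num
  · rename_i h
    push_neg at h
    linarith

lemma g_eq4 {x : ℝ} (hx : x ≤ 1) : g x = 4 := if_pos hx

lemma g_meas : Measurable g := by
  unfold g
  exact Measurable.ite measurableSet_Iic measurable_const (by fun_prop)

lemma g_ne0 (x : ℝ) : g x ≠ 0 := by have := g_ge4 x; linarith

/-- Sublinearity of `t ↦ K(1+t)^r` for `r < 1`. -/
lemma sublinear_bound (K r : ℝ) (hK : 0 < K) (hr0 : 0 < r) (hr1 : r < 1) :
    ∃ C0 : ℝ, 0 ≤ C0 ∧ ∀ T : ℝ, 0 ≤ T → K * (1 + T) ^ r ≤ T / 2 + C0 := by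
  set M : ℝ := max 1 ((4 * K) ^ ((1 - r)⁻¹)) with hMdef
  have hM1 : 1 ≤ M := le_max_left _ _
  have hM0 : (0 : ℝ) < M := lt_of_lt_of_le one_pos hM1
  have hKe : ((4 * K) ^ ((1 - r)⁻¹)) ^ (1 - r) = 4 * K := by
    rw [← Real.rpow_mul (by linarith : (0:ℝ) ≤ 4 * K),
      inv_mul_cancel₀ (by linarith : 1 - r ≠ 0), Real.rpow_one]
  have hMr : 4 * K ≤ M ^ (1 - r) := by
    calc 4 * K = ((4 * K) ^ ((1 - r)⁻¹)) ^ (1 - r) := hKe.symm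
      _ ≤ M ^ (1 - r) :=
        Real.rpow_le_rpow (Real.rpow_nonneg (by linarith) _) (le_max_right _ _) (by linarith)
  refine ⟨K * M ^ r + 1, by positivity, fun T hT => ?_⟩
  by_cases h : 1 + T ≤ M
  · have h1 : (1 + T) ^ r ≤ M ^ r := Real.rpow_le_rpow (by linarith) h hr0.le
    have h2 : K * (1 + T) ^ r ≤ K * M ^ r := by
      exact mul_le_mul_of_nonneg_left h1 hK.le
    linarith
  · push_neg at h
    have hTpos : (0 : ℝ) < 1 + T := by linarith
    have hmono : M ^ (1 - r) ≤ (1 + T) ^ (1 - r) :=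
      Real.rpow_le_rpow hM0.le h.le (by linarith)
    have h4K : (0 : ℝ) < 4 * K := by linarith
    have hTr : (0 : ℝ) < (1 + T) ^ (1 - r) := Real.rpow_pos_of_pos hTpos _
    have hinv : (1 + T) ^ (r - 1) ≤ (4 * K)⁻¹ := by
      rw [show r - 1 = -(1 - r) by ring, Real.rpow_neg hTpos.le]
      exact inv_anti₀ h4K (le_trans hMr hmono)
    have hsplit : (1 + T) ^ r = (1 + T) ^ (r - 1) * (1 + T) := by
      have h := Real.rpow_add hTpos (r - 1) 1
      rw [Real.rpow_one, show r - 1 + 1 = r from by ring] at h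
      exact h
    have : K * (1 + T) ^ r ≤ K * ((4 * K)⁻¹ * (1 + T)) := by
      rw [hsplit]
      have := mul_le_mul_of_nonneg_right hinv hTpos.le
      nlinarith
    have hKinv : K * ((4 * K)⁻¹ * (1 + T)) = (1 + T) / 4 := by
      field_simp
    rw [hKinv] at this
    have hMrpos : (0 : ℝ) ≤ K * M ^ r := by positivity
    linarith

/-- An `L¹`-bound from an `L²`-bound on `(0, δ]`. -/
lemma l1_bound (f : ℝ → ℝ) (δ c : ℝ) (hδ : 0 < δ) (hc : 0 < c)
    (hf2 : IntegrableOn (fun x => f x ^ 2) (Ioc 0 δ))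
    (hfm : AEStronglyMeasurable (fun x => |f x|) (volume.restrict (Ioc 0 δ))) :
    IntegrableOn (fun x => |f x|) (Ioc 0 δ) ∧
      ∫ x in Ioc 0 δ, |f x| ≤ (∫ x in Ioc 0 δ, f x ^ 2) / (2 * c) + c / 2 * δ := by
  have hptw : ∀ x : ℝ, |f x| ≤ f x ^ 2 / (2 * c) + c / 2 := by
    intro x
    have h1 : (0:ℝ) ≤ (|f x| - c) ^ 2 := sq_nonneg _
    have h2 : |f x| ^ 2 = f x ^ 2 := sq_abs (f x)
    rw [div_add' _ _ _ (by positivity), le_div_iff₀ (by positivity)]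
    nlinarith
  have hconst : IntegrableOn (fun _ : ℝ => c / 2) (Ioc 0 δ) :=
    integrableOn_const measure_Ioc_lt_top.ne
  have hg : IntegrableOn (fun x => f x ^ 2 / (2 * c) + c / 2) (Ioc 0 δ) :=
    (hf2.div_const _).add hconst
  have hint : IntegrableOn (fun x => |f x|) (Ioc 0 δ) := by
    refine hg.mono' hfm (Filter.Eventually.of_forall fun x => ?_)
    rw [Real.norm_eq_abs, abs_abs]
    exact hptw x
  refine ⟨hint, ?_⟩
  have hle : ∫ x in Ioc 0 δ, |f x| ≤ ∫ x in Ioc 0 δ, (f x ^ 2 / (2 * c) + c / 2) :=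
    integral_mono hint hg hptw
  have heq : ∫ x in Ioc 0 δ, (f x ^ 2 / (2 * c) + c / 2)
      = (∫ x in Ioc 0 δ, f x ^ 2) / (2 * c) + c / 2 * δ := by
    rw [integral_add (hf2.div_const _) hconst, integral_div, setIntegral_const,
      Real.volume_real_Ioc_of_le hδ.le, sub_zero, smul_eq_mul]
    ring
  linarith [heq ▸ hle]

set_option maxHeartbeats 1000000 in
/-- For every `q ∈ (2,4)`, `α > 0` and `μ > 0`, the reduced energy is bounded
below on `X_μ`: `𝓔̃_{q,α}(μ) > -∞`. -/
theorem stmt11 (q α μ : ℝ) (hq : 2 < q) (hq' : q < 4) (hα : 0 < α) (hμ : 0 < μ) :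
    ∃ C : ℝ, 0 ≤ C ∧ ∀ u u' : ℝ → ℝ, InH1g u u' → 0 < massg u → massg u ≤ μ →
      -C ≤ energyg q α u u' := by
  have hq0 : (0 : ℝ) < q := by linarith
  have hμs0 : (0 : ℝ) < Real.sqrt μ := Real.sqrt_pos.2 hμ
  have hμs2 : Real.sqrt μ ^ 2 = μ := Real.sq_sqrt hμ.le
  set K1 : ℝ := Real.sqrt μ + 1 with hK1def
  have hK1pos : (0 : ℝ) < K1 := by positivity
  set K : ℝ := α / q * K1 ^ q with hKdef
  have hKpos : (0 : ℝ) < K :=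
    mul_pos (div_pos hα hq0) (Real.rpow_pos_of_pos hK1pos q)
  obtain ⟨C0, hC00, hbound⟩ := sublinear_bound K (q / 4) hKpos (by linarith) (by linarith)
  refine ⟨C0, hC00, ?_⟩
  intro u u' hu _hm hmμ
  obtain ⟨hint_u, hint_u', hFTC⟩ := hu
  set T : ℝ := ∫ x in Ioi (0 : ℝ), u' x ^ 2 * g x with hTdef
  have hnng : ∀ (v : ℝ → ℝ) (x : ℝ), 0 ≤ v x ^ 2 * g x := fun v x =>
    mul_nonneg (sq_nonneg _) (by linarith [g_ge4 x])
  have hT0 : 0 ≤ T :=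
    setIntegral_nonneg measurableSet_Ioi fun x _ => hnng u' x
  set s : ℝ := Real.sqrt (1 + T) with hsdef
  have hs0 : (0 : ℝ) ≤ s := Real.sqrt_nonneg _
  have hs2 : s ^ 2 = 1 + T := Real.sq_sqrt (by linarith)
  have hs1 : (1 : ℝ) ≤ s := by nlinarith
  set t : ℝ := Real.sqrt s with htdef
  have ht0 : (0 : ℝ) ≤ t := Real.sqrt_nonneg _
  have ht2 : t ^ 2 = s := Real.sq_sqrt hs0
  have ht1 : (1 : ℝ) ≤ t := by nlinarith
  set δ : ℝ := s⁻¹ with hδdef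
  have hspos : (0 : ℝ) < s := by linarith
  have htpos : (0 : ℝ) < t := by linarith
  have hδ0 : (0 : ℝ) < δ := inv_pos.2 hspos
  have hδ1 : δ ≤ 1 := by
    rw [hδdef]
    exact inv_le_one_of_one_le₀ hs1
  have hsub : Ioc (0 : ℝ) δ ⊆ Ioi 0 := Ioc_subset_Ioi_self
  have hg4 : ∀ x ∈ Ioc (0 : ℝ) δ, g x = 4 := fun x hx => g_eq4 (le_trans hx.2 hδ1)
  -- integrability and mass bounds on (0, δ]
  have key : ∀ v : ℝ → ℝ, IntegrableOn (fun x => v x ^ 2 * g x) (Ioi 0) →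
      IntegrableOn (fun x => v x ^ 2) (Ioc 0 δ) ∧
      AEStronglyMeasurable (fun x => |v x|) (volume.restrict (Ioc 0 δ)) ∧
      ∫ x in Ioc 0 δ, v x ^ 2 ≤ (∫ x in Ioi (0:ℝ), v x ^ 2 * g x) / 4 := by
    intro v hv
    have hv' : IntegrableOn (fun x => v x ^ 2 * g x) (Ioc 0 δ) := hv.mono_set hsub
    have hv2 : IntegrableOn (fun x => v x ^ 2) (Ioc 0 δ) := by
      refine IntegrableOn.congr_fun (hv'.div_const 4) (fun x hx => ?_) measurableSet_Ioc
      rw [hg4 x hx]; ring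
    have haesm2 : AEStronglyMeasurable (fun x => v x ^ 2) (volume.restrict (Ioc 0 δ)) :=
      hv2.aestronglyMeasurable
    have haesm : AEStronglyMeasurable (fun x => |v x|) (volume.restrict (Ioc 0 δ)) := by
      have h := Real.continuous_sqrt.comp_aestronglyMeasurable haesm2
      refine h.congr (Filter.Eventually.of_forall fun x => ?_)
      exact Real.sqrt_sq_eq_abs (v x)
    refine ⟨hv2, haesm, ?_⟩
    have he : ∫ x in Ioc 0 δ, v x ^ 2 = (∫ x in Ioc 0 δ, v x ^ 2 * g x) / 4 := by
      rw [← integral_div]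
      refine setIntegral_congr_fun measurableSet_Ioc (fun x hx => ?_)
      rw [hg4 x hx]; ring
    have hmono : ∫ x in Ioc 0 δ, v x ^ 2 * g x ≤ ∫ x in Ioi (0:ℝ), v x ^ 2 * g x :=
      setIntegral_mono_set hv (Filter.Eventually.of_forall fun x => hnng v x)
        (HasSubset.Subset.eventuallyLE hsub)
    rw [he]
    linarith
  obtain ⟨hu2, haesm_u, hu2le⟩ := key u hint_u
  obtain ⟨hu'2, haesm_u', hu'2le⟩ := key u' hint_u'
  have hA2 : ∫ x in Ioc 0 δ, u x ^ 2 ≤ μ / 4 := by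
    have : massg u ≤ μ := hmμ
    rw [massg] at this
    calc ∫ x in Ioc 0 δ, u x ^ 2 ≤ (∫ x in Ioi (0:ℝ), u x ^ 2 * g x) / 4 := hu2le
      _ ≤ μ / 4 := by linarith
  have hB2 : ∫ x in Ioc 0 δ, u' x ^ 2 ≤ T / 4 := hu'2le
  -- L¹ bounds
  obtain ⟨habs_u, hIu⟩ := l1_bound u δ (Real.sqrt μ * t) hδ0 (by positivity) hu2 haesm_u
  obtain ⟨habs_u', hIu'⟩ := l1_bound u' δ (s * t) hδ0 (by positivity) hu'2 haesm_u'
  set Iu : ℝ := ∫ x in Ioc 0 δ, |u x| with hIudef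
  set Iu' : ℝ := ∫ x in Ioc 0 δ, |u' x| with hIu'def
  have hA20 : 0 ≤ ∫ x in Ioc 0 δ, u x ^ 2 :=
    setIntegral_nonneg measurableSet_Ioc fun x _ => sq_nonneg _
  have hB20 : 0 ≤ ∫ x in Ioc 0 δ, u' x ^ 2 :=
    setIntegral_nonneg measurableSet_Ioc fun x _ => sq_nonneg _
  -- numeric bounds: Iu' ≤ t and s * Iu ≤ √μ * t
  have hIu'le : Iu' ≤ t := by
    have e1 : s * t / 2 * δ = t / 2 := by
      rw [hδdef]
      field_simp
    have e2 : (∫ x in Ioc 0 δ, u' x ^ 2) / (2 * (s * t)) ≤ t / 8 := by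
      rw [div_le_iff₀ (by positivity)]
      nlinarith
    rw [hIu'def]
    calc (∫ x in Ioc 0 δ, |u' x|)
        ≤ (∫ x in Ioc 0 δ, u' x ^ 2) / (2 * (s * t)) + s * t / 2 * δ := hIu'
      _ ≤ t / 8 + t / 2 := by rw [e1] at *; linarith
      _ ≤ t := by linarith
  have hsIu : s * Iu ≤ Real.sqrt μ * t := by
    have e1 : Real.sqrt μ * t / 2 * δ = Real.sqrt μ * t / (2 * s) := by
      rw [hδdef]
      field_simp
    have e2 : (∫ x in Ioc 0 δ, u x ^ 2) / (2 * (Real.sqrt μ * t)) ≤ Real.sqrt μ / (8 * t) := by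
      rw [div_le_div_iff₀ (by positivity) (by positivity)]
      nlinarith
    have h3 : Iu ≤ Real.sqrt μ / (8 * t) + Real.sqrt μ * t / (2 * s) := by
      rw [hIudef]
      calc (∫ x in Ioc 0 δ, |u x|)
          ≤ (∫ x in Ioc 0 δ, u x ^ 2) / (2 * (Real.sqrt μ * t)) + Real.sqrt μ * t / 2 * δ := hIu
        _ ≤ Real.sqrt μ / (8 * t) + Real.sqrt μ * t / (2 * s) := by rw [e1]; linarith
    have h4 : s * Iu ≤ s * (Real.sqrt μ / (8 * t) + Real.sqrt μ * t / (2 * s)) :=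
      mul_le_mul_of_nonneg_left h3 hs0
    have h5 : s * (Real.sqrt μ / (8 * t) + Real.sqrt μ * t / (2 * s))
        = Real.sqrt μ * s / (8 * t) + Real.sqrt μ * t / 2 := by
      field_simp
    rw [h5] at h4
    have h6 : Real.sqrt μ * s / (8 * t) ≤ Real.sqrt μ * t / 8 := by
      rw [div_le_div_iff₀ (by positivity) (by norm_num)]
      nlinarith
    calc s * Iu ≤ Real.sqrt μ * s / (8 * t) + Real.sqrt μ * t / 2 := h4
      _ ≤ Real.sqrt μ * t / 8 + Real.sqrt μ * t / 2 := by linarith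
      _ ≤ Real.sqrt μ * t := by nlinarith
  -- averaging: δ |u 0| ≤ Iu + δ Iu'
  have hptavg : ∀ x ∈ Ioc (0 : ℝ) δ, |u 0| ≤ |u x| + Iu' := by
    intro x hx
    have h1 : u x - u 0 = ∫ y in (0:ℝ)..x, u' y := hFTC 0 x le_rfl hx.1.le
    have h2 : |∫ y in (0:ℝ)..x, u' y| ≤ ∫ y in (0:ℝ)..x, |u' y| :=
      intervalIntegral.abs_integral_le_integral_abs hx.1.le
    have h3 : ∫ y in (0:ℝ)..x, |u' y| = ∫ y in Ioc 0 x, |u' y| :=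
      intervalIntegral.integral_of_le hx.1.le
    have h4 : ∫ y in Ioc 0 x, |u' y| ≤ Iu' := by
      rw [hIu'def]
      exact setIntegral_mono_set habs_u'
        (Filter.Eventually.of_forall fun y => abs_nonneg _)
        (HasSubset.Subset.eventuallyLE (Ioc_subset_Ioc_right hx.2))
    have h5 : |u 0| ≤ |u x| + |u x - u 0| := by
      have := abs_sub_abs_le_abs_sub (u 0) (u x)
      have := abs_sub_comm (u 0) (u x)
      linarith [abs_nonneg (u x), le_abs_self (u 0), neg_abs_le (u 0),
        abs_sub (u 0) (u x)]
    rw [h1] at h5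
    rw [h3] at h2
    linarith
  have hIu'0 : 0 ≤ Iu' :=
    setIntegral_nonneg measurableSet_Ioc fun x _ => abs_nonneg _
  have havg : δ * |u 0| ≤ Iu + δ * Iu' := by
    have hconst1 : IntegrableOn (fun _ : ℝ => |u 0|) (Ioc 0 δ) :=
      integrableOn_const measure_Ioc_lt_top.ne
    have hconst2 : IntegrableOn (fun _ : ℝ => Iu') (Ioc 0 δ) :=
      integrableOn_const measure_Ioc_lt_top.ne
    have h := setIntegral_mono_on hconst1 (habs_u.add hconst2) measurableSet_Ioc hptavg
    simp only [Pi.add_apply] at h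
    rw [integral_add habs_u hconst2] at h
    simp only [setIntegral_const, Real.volume_real_Ioc_of_le hδ0.le, sub_zero,
      smul_eq_mul] at h
    rw [hIudef, hIu'def]
    exact h
  -- combine: |u 0| ≤ K1 * t
  have hu0 : |u 0| ≤ K1 * t := by
    have h := mul_le_mul_of_nonneg_left havg hs0
    have hsd : s * δ = 1 := by
      rw [hδdef]; exact mul_inv_cancel₀ (ne_of_gt hspos)
    have h' : |u 0| ≤ s * Iu + Iu' := by
      calc |u 0| = s * δ * |u 0| := by rw [hsd]; ring
        _ = s * (δ * |u 0|) := by ring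
        _ ≤ s * (Iu + δ * Iu') := h
        _ = s * Iu + s * δ * Iu' := by ring
        _ = s * Iu + Iu' := by rw [hsd]; ring
    calc |u 0| ≤ s * Iu + Iu' := h'
      _ ≤ Real.sqrt μ * t + t := by linarith
      _ = K1 * t := by rw [hK1def]; ring
  -- rpow bound
  have ht_eq : t ^ q = (1 + T) ^ (q / 4) := by
    have h1 : t = (1 + T) ^ ((1 : ℝ) / 4) := by
      rw [htdef, hsdef, Real.sqrt_eq_rpow, Real.sqrt_eq_rpow,
        ← Real.rpow_mul (by linarith : (0:ℝ) ≤ 1 + T)]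
      norm_num
    rw [h1, ← Real.rpow_mul (by linarith : (0:ℝ) ≤ 1 + T)]
    congr 1
    ring
  have hu0q : |u 0| ^ q ≤ K1 ^ q * (1 + T) ^ (q / 4) := by
    calc |u 0| ^ q ≤ (K1 * t) ^ q :=
        Real.rpow_le_rpow (abs_nonneg _) hu0 hq0.le
      _ = K1 ^ q * t ^ q := Real.mul_rpow hK1pos.le ht0
      _ = K1 ^ q * (1 + T) ^ (q / 4) := by rw [ht_eq]
  -- final energy bound
  have henergy : energyg q α u u' = 1 / 2 * T - α / q * |u 0| ^ q := by
    rw [energyg, hTdef]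
  have hαq : (0 : ℝ) ≤ α / q := (div_pos hα hq0).le
  have h1 : α / q * |u 0| ^ q ≤ α / q * (K1 ^ q * (1 + T) ^ (q / 4)) :=
    mul_le_mul_of_nonneg_left hu0q hαq
  have h2 : α / q * (K1 ^ q * (1 + T) ^ (q / 4)) = K * (1 + T) ^ (q / 4) := by
    rw [hKdef]; ring
  have h3 : K * (1 + T) ^ (q / 4) ≤ T / 2 + C0 := hbound T hT0
  rw [henergy]
  linarith
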